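/- Let E be a finite set, K a positive integer with K ≤ |E|, and g a real-valued function on finite subsets of E that is monotone (g(A) ≤ g(B) whenever A ⊆ B), submodular (g(A ∪ {e}) − g(A) ≥ g(B ∪ {e}) − g(B) whenever A ⊆ B and e ∈ E), and satisfies g(∅) = 0. Let a_1, …, a_K be chosen greedily, i.e., for each k, a_k ∈ E \ {a_1, …, a_{k−1}} maximizes g({a_1, …, a_{k−1}} ∪ {e}) − g({a_1, …, a_{k−1}}) over e ∈ E \ {a_1, …, a_{k−1}}. Then g({a_1, …, a_K}) ≥ (1 − 1/e) · max{g(S) : S ⊆ E, |S| = K}. -/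

import Mathlib

lemma marg_sum {ι : Type*} [DecidableEq ι] (g : Finset ι → ℝ)
    (hsub : ∀ (A B : Finset ι) (e : ι), A ⊆ B →
      g (insert e B) - g B ≤ g (insert e A) - g A)
    (S T : Finset ι) :
    g (S ∪ T) - g S ≤ ∑ e ∈ T, (g (insert e S) - g S) := by
  induction T using Finset.induction with
  | empty => simp
  | @insert t T ht ih =>
    have h1 : S ∪ insert t T = insert t (S ∪ T) := by
      ext x; simp [or_comm, or_left_comm]
    have h2 := hsub S (S ∪ T) t Finset.subset_union_left
    rw [h1, Finset.sum_insert ht]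
    linarith

/-- Classical `1 − 1/e` guarantee for greedy maximization of a monotone submodular
set function `g` with `g ∅ = 0` under a cardinality constraint `K`:
if `a 1, …, a K` are chosen greedily (each `a k` maximizes the marginal gain over the
prefix `{a 1, …, a (k−1)}` among items outside the prefix), then
`g {a 1, …, a K} ≥ (1 − 1/e) · max {g S : S ⊆ E, |S| = K}`. -/
theorem stmt_11 {ι : Type*} [Fintype ι] [DecidableEq ι]
    (K : ℕ) (hK : 0 < K) (hKE : K ≤ Fintype.card ι)
    (g : Finset ι → ℝ)
    (hmono : ∀ A B : Finset ι, A ⊆ B → g A ≤ g B)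
    (hsub : ∀ (A B : Finset ι) (e : ι), A ⊆ B →
      g (insert e B) - g B ≤ g (insert e A) - g A)
    (hempty : g ∅ = 0)
    (a : Fin K → ι) (ha : Function.Injective a)
    (hgreedy : ∀ (k : Fin K) (e : ι), e ∉ (Finset.Iio k).image a →
      g (insert e ((Finset.Iio k).image a)) - g ((Finset.Iio k).image a) ≤
        g (insert (a k) ((Finset.Iio k).image a)) - g ((Finset.Iio k).image a)) :
    (1 - 1 / Real.exp 1) *
        ((Finset.univ.powersetCard K).sup'
          (Finset.powersetCard_nonempty.mpr (by simpa using hKE)) g)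
      ≤ g (Finset.univ.image a) := by
  set OPT := ((Finset.univ.powersetCard K).sup'
      (Finset.powersetCard_nonempty.mpr (by simpa using hKE)) g) with hOPT
  obtain ⟨T, hTmem, hTg⟩ := Finset.exists_mem_eq_sup'
    (Finset.powersetCard_nonempty.mpr (by simpa using hKE) :
      (Finset.univ.powersetCard K).Nonempty) g
  have hTcard : T.card = K := (Finset.mem_powersetCard.mp hTmem).2
  have hOPT0 : 0 ≤ OPT := by
    rw [hOPT, hTg, ← hempty]
    exact hmono _ _ (Finset.empty_subset T)
  set S : ℕ → Finset ι := fun n =>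
    (Finset.univ.filter fun i : Fin K => (i : ℕ) < n).image a with hS
  have hKR : (0 : ℝ) < (K : ℝ) := by exact_mod_cast hK
  have hfrac : (0 : ℝ) ≤ 1 - 1 / (K : ℝ) := by
    have : 1 / (K : ℝ) ≤ 1 := by
      rw [div_le_one hKR]; exact_mod_cast hK
    linarith
  have hstep : ∀ n < K, OPT - g (S (n + 1)) ≤ (1 - 1 / (K : ℝ)) * (OPT - g (S n)) := by
    intro n hn
    set k : Fin K := ⟨n, hn⟩ with hk
    have hSk : (Finset.Iio k).image a = S n := by
      congr 1; ext i; simp [Fin.lt_def, hk]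
    have hins : S (n + 1) = insert (a k) (S n) := by
      show (Finset.univ.filter fun i : Fin K => (i : ℕ) < n + 1).image a =
        insert (a k) ((Finset.univ.filter fun i : Fin K => (i : ℕ) < n).image a)
      have hf : (Finset.univ.filter fun i : Fin K => (i : ℕ) < n + 1) =
          insert k (Finset.univ.filter fun i : Fin K => (i : ℕ) < n) := by
        ext i
        simp [Nat.lt_succ_iff_lt_or_eq, Fin.ext_iff, hk, or_comm]
        omega
      rw [hf, Finset.image_insert]
    set δ := g (insert (a k) (S n)) - g (S n) with hδ
    have hδ0 : 0 ≤ δ := by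
      have := hmono (S n) (insert (a k) (S n)) (Finset.subset_insert _ _)
      linarith
    have hterm : ∀ e ∈ T, g (insert e (S n)) - g (S n) ≤ δ := by
      intro e _
      by_cases he : e ∈ S n
      · rw [Finset.insert_eq_self.mpr he]; linarith
      · have := hgreedy k e (by rwa [hSk])
        rw [hSk] at this
        linarith
    have key : OPT - g (S n) ≤ (K : ℝ) * δ := by
      have h1 : OPT ≤ g (S n ∪ T) := by
        rw [hOPT, hTg]
        exact hmono _ _ Finset.subset_union_right
      have h2 := marg_sum g hsub (S n) T
      have h3 : ∑ e ∈ T, (g (insert e (S n)) - g (S n)) ≤ (K : ℝ) * δ := by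
        calc ∑ e ∈ T, (g (insert e (S n)) - g (S n)) ≤ ∑ _e ∈ T, δ :=
              Finset.sum_le_sum hterm
          _ = (K : ℝ) * δ := by rw [Finset.sum_const, hTcard, nsmul_eq_mul]
      linarith
    have hdiv : (OPT - g (S n)) / (K : ℝ) ≤ δ := by
      rw [div_le_iff₀ hKR]; linarith
    have : g (S (n + 1)) = g (S n) + δ := by rw [hins]; ring
    have hexp : (1 - 1 / (K : ℝ)) * (OPT - g (S n))
        = (OPT - g (S n)) - (OPT - g (S n)) / (K : ℝ) := by ring
    rw [this, hexp]
    linarith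
  have hiter : ∀ n, n ≤ K → OPT - g (S n) ≤ (1 - 1 / (K : ℝ)) ^ n * OPT := by
    intro n
    induction n with
    | zero =>
      intro _
      have : S 0 = ∅ := by simp [hS]
      simp [this, hempty]
    | succ m ih =>
      intro hm
      have hm' : m < K := hm
      calc OPT - g (S (m + 1)) ≤ (1 - 1 / (K : ℝ)) * (OPT - g (S m)) := hstep m hm'
        _ ≤ (1 - 1 / (K : ℝ)) * ((1 - 1 / (K : ℝ)) ^ m * OPT) :=
            mul_le_mul_of_nonneg_left (ih (le_of_lt hm')) hfrac
        _ = (1 - 1 / (K : ℝ)) ^ (m + 1) * OPT := by ring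
  have hfinal : S K = Finset.univ.image a := by
    have hf : (Finset.univ.filter fun i : Fin K => (i : ℕ) < K) = Finset.univ := by
      ext i; simpa using i.isLt
    show (Finset.univ.filter fun i : Fin K => (i : ℕ) < K).image a = Finset.univ.image a
    rw [hf]
  have hpow : (1 - 1 / (K : ℝ)) ^ K ≤ 1 / Real.exp 1 := by
    have h1 : (1 - 1 / (K : ℝ)) ≤ Real.exp (-(1 / (K : ℝ))) := by
      have := Real.add_one_le_exp (-(1 / (K : ℝ)))
      linarith
    have h2 : (1 - 1 / (K : ℝ)) ^ K ≤ (Real.exp (-(1 / (K : ℝ)))) ^ K :=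
      pow_le_pow_left₀ hfrac h1 K
    have h3 : (Real.exp (-(1 / (K : ℝ)))) ^ K = Real.exp (-1) := by
      rw [← Real.exp_nat_mul]
      congr 1
      field_simp
    rw [h3, Real.exp_neg] at h2
    simpa [one_div] using h2
  have h4 := hiter K le_rfl
  rw [hfinal] at h4
  have h5 : (1 - 1 / (K : ℝ)) ^ K * OPT ≤ (1 / Real.exp 1) * OPT :=
    mul_le_mul_of_nonneg_right hpow hOPT0
  nlinarith [h4, h5]
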